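/- For every d ≥ 2 and every i ∈ {1,…,d−1}, the covering minima of standard terminal simplices satisfy μ_i(T_d) ≤ max { μ_i(T_{d−1}), μ_{i−1}(T_{d−1}) + d/(d+1) }. -/

import Mathlib

open scoped Pointwise

/-- The `i`-th covering minimum of `K` with respect to a lattice given as a set `L`. -/
noncomputable def covMin {E : Type*} [AddCommGroup E] [Module ℝ E]
    (i : ℕ) (K L : Set E) : ℝ :=
  sInf {μ : ℝ | 0 ≤ μ ∧ ∀ U : AffineSubspace ℝ E, (U : Set E).Nonempty →
    Module.finrank ℝ U.direction = Module.finrank ℝ E - i →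
    ((μ • K + L) ∩ (U : Set E)).Nonempty}

/-- The integer lattice `ℤ^d` inside `ℝ^d`. -/
def intLat (d : ℕ) : Set (Fin d → ℝ) := {x | ∀ j, ∃ m : ℤ, x j = (m : ℝ)}

/-- The standard terminal simplex `T_d = conv(-𝟙_d, e_1, …, e_d) ⊆ ℝ^d`. -/
def stdTerminal (d : ℕ) : Set (Fin d → ℝ) :=
  convexHull ℝ (insert (fun _ => (-1 : ℝ)) (Set.range fun j : Fin d => Pi.single j (1 : ℝ)))


def satIneq (k : ℕ) (μ : ℝ) (x : Fin k → ℝ) : Prop :=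
  (∑ j, x j) ≤ μ ∧ ∀ j, (∑ j', x j') ≤ ((k : ℝ) + 1) * x j + μ

lemma mem_stdTerminal_of_sat {k : ℕ} {x : Fin k → ℝ} (h : satIneq k 1 x) :
    x ∈ stdTerminal k := by
  classical
  set lam0 : ℝ := (1 - ∑ j, x j) / ((k : ℝ) + 1) with hlam0def
  have hk : (0:ℝ) < (k:ℝ) + 1 := by positivity
  have hlam0 : 0 ≤ lam0 := div_nonneg (by linarith [h.1]) hk.le
  have hmul : ((k:ℝ) + 1) * lam0 = 1 - ∑ j, x j := by
    rw [hlam0def]; field_simp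
  set w : Option (Fin k) → ℝ := fun o => o.elim lam0 (fun j => x j + lam0) with hw
  set z : Option (Fin k) → (Fin k → ℝ) :=
    fun o => o.elim (fun _ => (-1:ℝ)) (fun j => Pi.single j 1) with hzdef
  have hsum : ∑ o : Option (Fin k), w o = 1 := by
    rw [Fintype.sum_option]
    simp only [hw, Option.elim]
    rw [Finset.sum_add_distrib, Finset.sum_const, Finset.card_univ, Fintype.card_fin,
      nsmul_eq_mul]
    linarith [hmul]
  have hw0 : ∀ o ∈ Finset.univ, 0 ≤ w o := by
    rintro (_ | j) -
    · exact hlam0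
    · have := h.2 j
      simp only [hw, Option.elim]
      have : 0 ≤ ((k:ℝ)+1) * (x j + lam0) := by nlinarith [h.2 j]
      nlinarith
  have hmem : ∀ o ∈ Finset.univ, z o ∈
      insert (fun _ => (-1 : ℝ)) (Set.range fun j : Fin k => Pi.single j (1 : ℝ)) := by
    rintro (_ | j) -
    · exact Set.mem_insert _ _
    · exact Set.mem_insert_of_mem _ ⟨j, rfl⟩
  have hcm := Finset.centerMass_mem_convexHull Finset.univ hw0 (by rw [hsum]; norm_num) hmem
  rw [Finset.centerMass_eq_of_sum_1 _ _ hsum] at hcm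
  have hx : ∑ o : Option (Fin k), w o • z o = x := by
    funext l
    rw [Finset.sum_apply]
    rw [Fintype.sum_option]
    simp only [hw, hzdef, Option.elim, Pi.smul_apply, smul_eq_mul, Pi.single_apply, mul_ite,
      mul_one, mul_zero]
    rw [Finset.sum_ite_eq Finset.univ l (fun j => x j + lam0)]
    simp
  rwa [hx] at hcm

lemma sat_of_mem_stdTerminal {k : ℕ} {x : Fin k → ℝ} (h : x ∈ stdTerminal k) :
    satIneq k 1 x := by
  have hsub : stdTerminal k ⊆ {y | satIneq k 1 y} := by
    apply convexHull_min
    · rintro y (rfl | ⟨j, rfl⟩)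
      · constructor
        · simp only [Finset.sum_const, Finset.card_univ, Fintype.card_fin, nsmul_eq_mul,
            mul_neg, mul_one]
          have : (0:ℝ) ≤ (k:ℝ) := Nat.cast_nonneg k
          linarith
        · intro j
          simp only [Finset.sum_const, Finset.card_univ, Fintype.card_fin, nsmul_eq_mul,
            mul_neg, mul_one]
          nlinarith [Nat.cast_nonneg (α := ℝ) k]
      · have hsum : ∑ l, Pi.single j (1:ℝ) l = 1 := by
          simp [Pi.single_apply]
        constructor
        · rw [hsum]
        · intro l
          rw [hsum]
          rcases eq_or_ne l j with rfl | hne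
          · simp [Pi.single_apply]
            nlinarith [Nat.cast_nonneg (α := ℝ) k]
          · simp [Pi.single_apply, hne]
    · intro a ha b hb sa sb hsa hsb hab
      have hsuma : ∀ (u v : Fin k → ℝ), (∑ j, (sa • u + sb • v) j) = sa * ∑ j, u j + sb * ∑ j, v j := by
        intro u v
        simp only [Pi.add_apply, Pi.smul_apply, smul_eq_mul]
        rw [Finset.sum_add_distrib, Finset.mul_sum, Finset.mul_sum]
      constructor
      · rw [hsuma]
        nlinarith [ha.1, hb.1]
      · intro j
        rw [hsuma]
        have h1 := ha.2 j
        have h2 := hb.2 j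
        simp only [Pi.add_apply, Pi.smul_apply, smul_eq_mul]
        nlinarith
  exact hsub h

lemma mem_smul_of_sat {k : ℕ} {μ : ℝ} {x : Fin k → ℝ} (hμ : 0 < μ) (h : satIneq k μ x) :
    x ∈ μ • stdTerminal k := by
  have hinv : (0:ℝ) ≤ μ⁻¹ := by positivity
  refine Set.mem_smul_set.2 ⟨μ⁻¹ • x, mem_stdTerminal_of_sat ⟨?_, ?_⟩, ?_⟩
  · have h2 : μ⁻¹ * (∑ j, x j) ≤ μ⁻¹ * μ := mul_le_mul_of_nonneg_left h.1 hinv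
    rw [inv_mul_cancel₀ hμ.ne'] at h2
    simpa [Finset.mul_sum] using h2
  · intro j
    have h2 : μ⁻¹ * (∑ j', x j') ≤ μ⁻¹ * (((k:ℝ)+1) * x j + μ) :=
      mul_le_mul_of_nonneg_left (h.2 j) hinv
    rw [mul_add, inv_mul_cancel₀ hμ.ne'] at h2
    calc (∑ j', (μ⁻¹ • x) j') = μ⁻¹ * ∑ j', x j' := by simp [Finset.mul_sum]
    _ ≤ μ⁻¹ * (((k:ℝ)+1) * x j) + 1 := h2.trans_eq (by ring_nf)
    _ = ((k:ℝ)+1) * (μ⁻¹ • x) j + 1 := by simp; ring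
  · rw [smul_inv_smul₀ hμ.ne']

def covSet {E : Type*} [AddCommGroup E] [Module ℝ E] (i : ℕ) (K L : Set E) : Set ℝ :=
  {μ : ℝ | 0 ≤ μ ∧ ∀ U : AffineSubspace ℝ E, (U : Set E).Nonempty →
    Module.finrank ℝ U.direction = Module.finrank ℝ E - i →
    ((μ • K + L) ∩ (U : Set E)).Nonempty}

lemma covMin_eq {E : Type*} [AddCommGroup E] [Module ℝ E] (i : ℕ) (K L : Set E) :
    covMin i K L = sInf (covSet i K L) := rfl

lemma covSet_bddBelow {E : Type*} [AddCommGroup E] [Module ℝ E] (i : ℕ) (K L : Set E) :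
    BddBelow (covSet i K L) := ⟨0, fun _ hx => hx.1⟩

lemma covMin_nonneg {E : Type*} [AddCommGroup E] [Module ℝ E] (i : ℕ) (K L : Set E) :
    0 ≤ covMin i K L :=
  Real.sInf_nonneg (fun _ hx => hx.1)

lemma covSet_top (k j : ℕ) : ((k:ℝ)+1) ∈ covSet j (stdTerminal k) (intLat k) := by
  refine ⟨by positivity, ?_⟩
  intro U hU _
  obtain ⟨u, hu⟩ := hU
  refine ⟨u, ?_, hu⟩
  have hsumle : (∑ l, (u l - (⌊u l⌋ : ℝ))) ≤ (k : ℝ) := by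
    calc (∑ l, (u l - (⌊u l⌋:ℝ))) ≤ ∑ _l : Fin k, (1:ℝ) :=
          Finset.sum_le_sum (fun l _ => by linarith [Int.lt_floor_add_one (u l)])
    _ = (k:ℝ) := by simp
  refine Set.mem_add.2 ⟨(fun l => u l - (⌊u l⌋ : ℝ)), ?_, (fun l => ((⌊u l⌋ : ℤ) : ℝ)),
    fun l => ⟨⌊u l⌋, rfl⟩, by funext l; simp⟩
  apply mem_smul_of_sat (by positivity)
  constructor
  · exact hsumle.trans (by linarith)
  · intro l
    show (∑ j' : Fin k, (u j' - (⌊u j'⌋:ℝ))) ≤ ((k:ℝ)+1) * (u l - (⌊u l⌋:ℝ)) + ((k:ℝ)+1)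
    have h1 := Int.floor_le (u l)
    have : (0:ℝ) ≤ u l - (⌊u l⌋:ℝ) := by linarith
    nlinarith [Nat.cast_nonneg (α := ℝ) k]


section Proj

variable {n : ℕ}

noncomputable def projMap (n : ℕ) : (Fin (n+1) → ℝ) →ₗ[ℝ] (Fin n → ℝ) :=
  LinearMap.funLeft ℝ ℝ Fin.castSucc

def vlast (n : ℕ) : Fin (n+1) → ℝ := Pi.single (Fin.last n) 1

lemma projMap_apply (x : Fin (n+1) → ℝ) (j : Fin n) : projMap n x j = x j.castSucc := rfl

lemma vlast_ne_zero : vlast n ≠ 0 := by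
  intro h
  have := congrFun h (Fin.last n)
  simp [vlast] at this

lemma projMap_vlast : projMap n (vlast n) = 0 := by
  funext j
  rw [projMap_apply]
  simp [vlast, Pi.single_apply, (Fin.castSucc_lt_last j).ne]

lemma eq_smul_vlast_of_projMap_eq_zero {x : Fin (n+1) → ℝ} (hx : projMap n x = 0) :
    x = x (Fin.last n) • vlast n := by
  funext j
  refine Fin.lastCases ?_ (fun j => ?_) j
  · simp [vlast, Pi.single_apply]
  · have h0 : x j.castSucc = 0 := congrFun hx j
    simp [h0, vlast, Pi.single_apply, (Fin.castSucc_lt_last j).ne]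

lemma finrank_map_of_mem (W : Submodule ℝ (Fin (n+1) → ℝ)) (hv : vlast n ∈ W) :
    Module.finrank ℝ (W.map (projMap n)) + 1 = Module.finrank ℝ W := by
  have hrn := LinearMap.finrank_range_add_finrank_ker ((projMap n).domRestrict W)
  rw [LinearMap.range_domRestrict] at hrn
  have hker' : LinearMap.ker ((projMap n).domRestrict W)
      = Submodule.span ℝ {(⟨vlast n, hv⟩ : W)} := by
    ext x
    simp only [LinearMap.mem_ker, LinearMap.domRestrict_apply, Submodule.mem_span_singleton]
    constructor
    · intro hx
      exact ⟨x.1 (Fin.last n), Subtype.ext (eq_smul_vlast_of_projMap_eq_zero hx).symm⟩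
    · rintro ⟨c, rfl⟩
      show projMap n (c • vlast n) = 0
      rw [map_smul, projMap_vlast, smul_zero]
  have hone : Module.finrank ℝ (LinearMap.ker ((projMap n).domRestrict W)) = 1 := by
    rw [hker']
    exact finrank_span_singleton (by
      intro h
      exact vlast_ne_zero (congrArg Subtype.val h))
  omega

lemma finrank_map_of_not_mem (W : Submodule ℝ (Fin (n+1) → ℝ)) (hv : vlast n ∉ W) :
    Module.finrank ℝ (W.map (projMap n)) = Module.finrank ℝ W := by
  have hmap : ∀ x ∈ W, projMap n x ∈ W.map (projMap n) :=
    fun x hx => Submodule.mem_map_of_mem hx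
  let g := (projMap n).restrict hmap
  have hinj : Function.Injective g := by
    intro a b hab
    have hfe : projMap n a.1 = projMap n b.1 := congrArg Subtype.val hab
    have h0 : projMap n (a.1 - b.1) = 0 := by rw [map_sub, hfe, sub_self]
    have hd := eq_smul_vlast_of_projMap_eq_zero h0
    rcases eq_or_ne ((a.1 - b.1) (Fin.last n)) 0 with hc | hc
    · rw [hc, zero_smul] at hd
      exact Subtype.ext (sub_eq_zero.mp hd)
    · exfalso
      apply hv
      have hvv : vlast n = ((a.1 - b.1) (Fin.last n))⁻¹ • (a.1 - b.1) := by
        rw [eq_inv_smul_iff₀ hc]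
        exact hd.symm
      rw [hvv]
      exact Submodule.smul_mem _ _ (Submodule.sub_mem _ a.2 b.2)
  have hsurj : Function.Surjective g := by
    rintro ⟨y, hy⟩
    rcases Submodule.mem_map.1 hy with ⟨x, hxW, rfl⟩
    exact ⟨⟨x, hxW⟩, rfl⟩
  exact ((LinearEquiv.ofBijective g ⟨hinj, hsurj⟩).finrank_eq).symm

lemma snoc_add (a b : Fin n → ℝ) (h h' : ℝ) :
    Fin.snoc a h + Fin.snoc b h' = (Fin.snoc (a + b) (h + h') : Fin (n+1) → ℝ) := by
  funext j
  refine Fin.lastCases ?_ (fun j => ?_) j <;> simp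

lemma snoc_mem_intLat {z : Fin n → ℝ} (hz : z ∈ intLat n) (m : ℤ) :
    (Fin.snoc z (m : ℝ) : Fin (n+1) → ℝ) ∈ intLat (n+1) := by
  intro j
  refine Fin.lastCases ?_ (fun j => ?_) j
  · exact ⟨m, by simp⟩
  · obtain ⟨m', hm'⟩ := hz j
    exact ⟨m', by simp [hm']⟩

lemma sum_snoc (a : Fin n → ℝ) (h : ℝ) :
    (∑ j, (Fin.snoc a h : Fin (n+1) → ℝ) j) = (∑ j, a j) + h := by
  rw [Fin.sum_univ_castSucc]
  simp

end Proj

set_option maxHeartbeats 1000000 in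
/-- **Recursive bound for terminal simplices.** For `d ≥ 2` and `1 ≤ i ≤ d-1`,
`μ_i(T_d) ≤ max { μ_i(T_{d-1}), μ_{i-1}(T_{d-1}) + d/(d+1) }`
(with the convention `μ_0 = 0`, which holds automatically for `covMin`). -/
theorem covMin_stdTerminal_recursive_bound (d i : ℕ) (hd : 2 ≤ d) (hi : 1 ≤ i)
    (hid : i ≤ d - 1) :
    covMin i (stdTerminal d) (intLat d) ≤
      max (covMin i (stdTerminal (d - 1)) (intLat (d - 1)))
        (covMin (i - 1) (stdTerminal (d - 1)) (intLat (d - 1)) + (d : ℝ) / ((d : ℝ) + 1)) := by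
  obtain ⟨n, rfl⟩ : ∃ n, d = n + 1 := ⟨d - 1, by omega⟩
  obtain ⟨i', rfl⟩ : ∃ i', i = i' + 1 := ⟨i - 1, by omega⟩
  have hin : i' + 1 ≤ n := by omega
  simp only [Nat.add_sub_cancel]
  set N : ℝ := (n : ℝ) with hN
  have hN0 : (0:ℝ) ≤ N := Nat.cast_nonneg n
  have hN1 : (0:ℝ) < N + 1 := by linarith
  have hN2 : (0:ℝ) < N + 2 := by linarith
  set c : ℝ := (N + 1) / (N + 2) with hc
  have hceq : ((n+1:ℕ):ℝ) / (((n+1:ℕ):ℝ) + 1) = c := by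
    rw [hc, hN]; push_cast; ring_nf
  have hc2 : (N + 2) * c = N + 1 := by rw [hc]; field_simp
  have hcpos : 0 < c := by rw [hc]; positivity
  rw [hceq]
  set A := covMin (i'+1) (stdTerminal n) (intLat n) with hA
  set B := covMin i' (stdTerminal n) (intLat n) with hB
  have hBnn : 0 ≤ B := covMin_nonneg _ _ _
  apply le_of_forall_gt_imp_ge_of_dense
  intro μ hμ
  have hAμ : A < μ := lt_of_le_of_lt (le_max_left _ _) hμ
  have hBμ : B + c < μ := lt_of_le_of_lt (le_max_right _ _) hμ
  have hμpos : 0 < μ := by linarith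
  rw [covMin_eq]
  apply csInf_le (covSet_bddBelow _ _ _)
  refine ⟨hμpos.le, ?_⟩
  intro U hUne hdim
  rw [Module.finrank_fin_fun] at hdim
  set π := (projMap n).toAffineMap with hπ
  set U' := U.map π with hU'def
  have hdir : U'.direction = U.direction.map (projMap n) := by
    rw [hU'def, AffineSubspace.map_direction, hπ, LinearMap.toAffineMap_linear]
  have hU'ne : (U' : Set (Fin n → ℝ)).Nonempty := by
    obtain ⟨u, hu⟩ := hUne
    exact ⟨π u, AffineSubspace.mem_map.2 ⟨u, hu, rfl⟩⟩
  by_cases hv : vlast n ∈ U.direction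
  · -- Case A : the vertical direction is in U
    have hr := finrank_map_of_mem U.direction hv
    have hd1 : Module.finrank ℝ U'.direction = Module.finrank ℝ (Fin n → ℝ) - (i'+1) := by
      rw [Module.finrank_fin_fun, hdir]; omega
    have hAlt : sInf (covSet (i'+1) (stdTerminal n) (intLat n)) < μ := by
      rw [← covMin_eq, ← hA]; exact hAμ
    obtain ⟨ν, hνmem, hνlt⟩ := exists_lt_of_csInf_lt ⟨_, covSet_top n (i'+1)⟩ hAlt
    obtain ⟨q, hq1, hq2⟩ := hνmem.2 U' hU'ne hd1
    rcases Set.mem_add.1 hq1 with ⟨a, ha, z, hz, haz⟩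
    rcases Set.mem_smul_set.1 ha with ⟨t, ht, rfl⟩
    rcases AffineSubspace.mem_map.1 hq2 with ⟨u, huU, hπu⟩
    have hν0 : 0 ≤ ν := hνmem.1
    have hνμ : ν ≤ μ := hνlt.le
    have hsat := sat_of_mem_stdTerminal ht
    set s := ∑ j, t j with hs
    have hs1 : s ≤ 1 := hsat.1
    set h₀ : ℝ := ν * (s - 1) / (N + 1) with hh₀
    have hden : (N + 1) * h₀ = ν * (s - 1) := by rw [hh₀]; field_simp
    have hνs : ν * s ≤ ν := by linarith [mul_nonneg hν0 (sub_nonneg.2 hs1)]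
    have hh₀le : h₀ ≤ 0 := by
      have h2 : (N+1) * h₀ ≤ (N+1) * 0 := by rw [mul_zero]; linarith [hden, hνs]
      exact le_of_mul_le_mul_left h2 hN1
    have hS : (∑ j, (Fin.snoc (ν • t) h₀ : Fin (n+1) → ℝ) j) = ν * s + h₀ := by
      rw [sum_snoc]
      simp only [Pi.smul_apply, smul_eq_mul]
      rw [← Finset.mul_sum, ← hs]
    refine ⟨Fin.snoc q h₀, ?_, ?_⟩
    · refine Set.mem_add.2 ⟨Fin.snoc (ν • t) h₀, ?_, Fin.snoc z ((0:ℤ):ℝ), snoc_mem_intLat hz 0, ?_⟩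
      · apply mem_smul_of_sat hμpos
        constructor
        · rw [hS]; linarith
        · intro j
          rw [hS]
          refine Fin.lastCases ?_ (fun j' => ?_) j
          · rw [Fin.snoc_last]
            have : ν * s + h₀ ≤ (N + 2) * h₀ + μ := by linarith [hden]
            push_cast
            linarith [this]
          · rw [Fin.snoc_castSucc]
            simp only [Pi.smul_apply, smul_eq_mul]
            have key := mul_le_mul_of_nonneg_left (hsat.2 j') hν0
            have key2 : ν * s ≤ (N + 1) * (ν * t j') + ν := by linarith [key]
            have h3 : (N+1) * h₀ ≤ (N+1) * (ν * t j') := by rw [hden]; linarith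
            have h4 := le_of_mul_le_mul_left h3 hN1
            have : ν * s + h₀ ≤ (N + 2) * (ν * t j') + μ := by linarith
            push_cast
            linarith [this]
      · rw [snoc_add, haz]
        norm_num
    · -- Fin.snoc q h₀ ∈ U
      have hcmem : ((h₀ - u (Fin.last n)) • vlast n) +ᵥ u ∈ U :=
        AffineSubspace.vadd_mem_of_mem_direction (Submodule.smul_mem _ _ hv) huU
      have hxeq : (Fin.snoc q h₀ : Fin (n+1) → ℝ) = ((h₀ - u (Fin.last n)) • vlast n) +ᵥ u := by
        funext j
        refine Fin.lastCases ?_ (fun j' => ?_) j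
        · simp [vlast, Pi.single_apply, vadd_eq_add]
        · have hq' : u j'.castSucc = q j' := congrFun hπu j'
          simp [vlast, Pi.single_apply, vadd_eq_add, (Fin.castSucc_lt_last j').ne, hq']
      rw [hxeq]
      exact hcmem
  · -- Case B : the vertical direction is not in U
    have hr := finrank_map_of_not_mem U.direction hv
    have hd1 : Module.finrank ℝ U'.direction = Module.finrank ℝ (Fin n → ℝ) - i' := by
      rw [Module.finrank_fin_fun, hdir]; omega
    have hBlt : sInf (covSet i' (stdTerminal n) (intLat n)) < μ - c := by
      rw [← covMin_eq, ← hB]; linarith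
    obtain ⟨ν, hνmem, hνlt⟩ := exists_lt_of_csInf_lt ⟨_, covSet_top n i'⟩ hBlt
    obtain ⟨q, hq1, hq2⟩ := hνmem.2 U' hU'ne hd1
    rcases Set.mem_add.1 hq1 with ⟨a, ha, z, hz, haz⟩
    rcases Set.mem_smul_set.1 ha with ⟨t, ht, rfl⟩
    rcases AffineSubspace.mem_map.1 hq2 with ⟨u, huU, hπu⟩
    have hν0 : 0 ≤ ν := hνmem.1
    have hsat := sat_of_mem_stdTerminal ht
    set s := ∑ j, t j with hs
    have hs1 : s ≤ 1 := hsat.1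
    set Lb : ℝ := (ν * s - μ) / (N + 1) with hLb
    have hdenL : (N + 1) * Lb = ν * s - μ := by rw [hLb]; field_simp
    set m : ℤ := ⌊u (Fin.last n) - Lb⌋ with hm
    set hgt : ℝ := u (Fin.last n) - m with hh
    have hm1 : Lb ≤ hgt := by
      have := Int.floor_le (u (Fin.last n) - Lb)
      rw [hh]; linarith
    have hm2 : hgt < Lb + 1 := by
      have := Int.lt_floor_add_one (u (Fin.last n) - Lb)
      rw [hh]; linarith
    have hνs : ν * s ≤ ν := by linarith [mul_nonneg hν0 (sub_nonneg.2 hs1)]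
    have e1 : (N+1) * hgt < (N+1) * (Lb + 1) := mul_lt_mul_of_pos_left hm2 hN1
    have e2 : (N+2) * ν < (N+2) * μ - (N+1) := by
      have := mul_lt_mul_of_pos_left hνlt hN2
      linarith [this, hc2]
    have hS : (∑ j, (Fin.snoc (ν • t) hgt : Fin (n+1) → ℝ) j) = ν * s + hgt := by
      rw [sum_snoc]
      simp only [Pi.smul_apply, smul_eq_mul]
      rw [← Finset.mul_sum, ← hs]
    refine ⟨u, ?_, huU⟩
    refine Set.mem_add.2 ⟨Fin.snoc (ν • t) hgt, ?_, Fin.snoc z ((m:ℤ):ℝ), snoc_mem_intLat hz m, ?_⟩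
    · apply mem_smul_of_sat hμpos
      constructor
      · rw [hS]
        have h1' := mul_le_mul_of_nonneg_left hνs hN2.le
        have final : (N+1) * (ν * s + hgt) ≤ (N+1) * μ := by linarith [e1, hdenL, h1', e2]
        exact le_of_mul_le_mul_left final hN1
      · intro j
        rw [hS]
        refine Fin.lastCases ?_ (fun j' => ?_) j
        · rw [Fin.snoc_last]
          have e3 := mul_le_mul_of_nonneg_left hm1 hN1.le
          have : ν * s + hgt ≤ (N + 2) * hgt + μ := by linarith [hdenL, e3]
          push_cast
          linarith [this]
        · rw [Fin.snoc_castSucc]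
          simp only [Pi.smul_apply, smul_eq_mul]
          have key := mul_le_mul_of_nonneg_left (hsat.2 j') hν0
          have key2 : ν * s ≤ (N + 1) * (ν * t j') + ν := by linarith [key]
          have e4 := mul_le_mul_of_nonneg_left key2 hN2.le
          have final : (N+1) * (ν * s + hgt) ≤ (N+1) * ((N + 2) * (ν * t j') + μ) := by
            linarith [e1, e4, e2, hdenL]
          have := le_of_mul_le_mul_left final hN1
          push_cast
          linarith [this]
    · funext j
      refine Fin.lastCases ?_ (fun j' => ?_) j
      · simp only [Pi.add_apply, Fin.snoc_last]
        rw [hh]; ring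
      · simp only [Pi.add_apply, Fin.snoc_castSucc]
        have h1 : (ν • t) j' + z j' = q j' := by
          have := congrFun haz j'
          simpa using this
        have h2 : u j'.castSucc = q j' := congrFun hπu j'
        rw [h1, h2]
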